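/- Let n ≥ 3 and C > 0. Suppose I, H : (1,∞) → (0,∞) are differentiable with I' < 0, H' < 0, satisfying the differential inequality [−I'(λ)/(λ(n−2)(n−1))]^((n−2)/n) ≤ C[((λ²−1)/(2λ(n−1)))I'(λ) + I(λ)] and the differential equation [−H'(λ)/(λ(n−2)(n−1))]^((n−2)/n) = C[((λ²−1)/(2λ(n−1)))H'(λ) + H(λ)] for all λ > 1. If liminf_{λ→1⁺} I(λ)/H(λ) > 1, then I(λ) ≥ H(λ) for all λ > 1. -/
import Mathlib


open Real Filter

/-- ODE vs ODI comparison principle: if I satisfies the differential inequality,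
H solves the corresponding ODE, both are positive and decreasing on (1,∞), and
liminf_{λ→1⁺} I(λ)/H(λ) > 1, then I ≥ H on (1,∞). -/
theorem stmt_10 (n : ℕ) (hn : 3 ≤ n) (C : ℝ) (hC : 0 < C)
    (I H I' H' : ℝ → ℝ)
    (hIpos : ∀ lam : ℝ, 1 < lam → 0 < I lam)
    (hHpos : ∀ lam : ℝ, 1 < lam → 0 < H lam)
    (hId : ∀ lam : ℝ, 1 < lam → HasDerivAt I (I' lam) lam)
    (hI'neg : ∀ lam : ℝ, 1 < lam → I' lam < 0)
    (hHd : ∀ lam : ℝ, 1 < lam → HasDerivAt H (H' lam) lam)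
    (hH'neg : ∀ lam : ℝ, 1 < lam → H' lam < 0)
    (hodi : ∀ lam : ℝ, 1 < lam →
      (-(I' lam) / (lam * ((n : ℝ) - 2) * ((n : ℝ) - 1))) ^ (((n : ℝ) - 2) / n) ≤
        C * ((lam ^ 2 - 1) / (2 * lam * ((n : ℝ) - 1)) * I' lam + I lam))
    (hode : ∀ lam : ℝ, 1 < lam →
      (-(H' lam) / (lam * ((n : ℝ) - 2) * ((n : ℝ) - 1))) ^ (((n : ℝ) - 2) / n) =
        C * ((lam ^ 2 - 1) / (2 * lam * ((n : ℝ) - 1)) * H' lam + H lam))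
    (hliminf : 1 < liminf (fun lam => I lam / H lam) (nhdsWithin 1 (Set.Ioi 1))) :
    ∀ lam : ℝ, 1 < lam → H lam ≤ I lam := by
  have hn2 : (2 : ℝ) < (n : ℝ) := by
    have h3 : (3 : ℝ) ≤ (n : ℝ) := by exact_mod_cast hn
    linarith
  have hp : 0 < ((n : ℝ) - 2) / n := div_pos (by linarith) (by linarith)
  -- key comparison step: where I ≤ H, we have H' ≤ I'
  have key : ∀ lam : ℝ, 1 < lam → I lam ≤ H lam → H' lam ≤ I' lam := by
    intro lam hl hIH
    by_contra hcon
    push_neg at hcon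
    have hd : 0 < lam * ((n : ℝ) - 2) * ((n : ℝ) - 1) := by
      have h1 : (0:ℝ) < lam := by linarith
      have h2 : (0:ℝ) < (n:ℝ) - 2 := by linarith
      have h3 : (0:ℝ) < (n:ℝ) - 1 := by linarith
      positivity
    have hab : -(H' lam) / (lam * ((n : ℝ) - 2) * ((n : ℝ) - 1)) <
        -(I' lam) / (lam * ((n : ℝ) - 2) * ((n : ℝ) - 1)) :=
      (div_lt_div_iff_of_pos_right hd).mpr (by linarith)
    have hbpos : 0 ≤ -(H' lam) / (lam * ((n : ℝ) - 2) * ((n : ℝ) - 1)) :=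
      le_of_lt (div_pos (by linarith [hH'neg lam hl]) hd)
    have hrp : (-(H' lam) / (lam * ((n : ℝ) - 2) * ((n : ℝ) - 1))) ^ (((n : ℝ) - 2) / n) <
        (-(I' lam) / (lam * ((n : ℝ) - 2) * ((n : ℝ) - 1))) ^ (((n : ℝ) - 2) / n) :=
      Real.rpow_lt_rpow hbpos hab hp
    have h1 := hode lam hl
    have h2 := hodi lam hl
    -- C*(k*H' + H) < C*(k*I' + I)
    have h3 : C * ((lam ^ 2 - 1) / (2 * lam * ((n : ℝ) - 1)) * H' lam + H lam) <
        C * ((lam ^ 2 - 1) / (2 * lam * ((n : ℝ) - 1)) * I' lam + I lam) := by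
      rw [← h1]; exact lt_of_lt_of_le hrp h2
    have h4 : (lam ^ 2 - 1) / (2 * lam * ((n : ℝ) - 1)) * H' lam + H lam <
        (lam ^ 2 - 1) / (2 * lam * ((n : ℝ) - 1)) * I' lam + I lam :=
      lt_of_mul_lt_mul_left (by linarith [h3]) hC.le
    have hk : 0 < (lam ^ 2 - 1) / (2 * lam * ((n : ℝ) - 1)) := by
      apply div_pos (by nlinarith) (by nlinarith)
    nlinarith [mul_lt_mul_of_pos_left hcon hk]
  -- near 1, I > H
  have hIoi : ∀ᶠ l in nhdsWithin (1:ℝ) (Set.Ioi 1), l ∈ Set.Ioi (1:ℝ) :=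
    self_mem_nhdsWithin
  have hbdd : Filter.IsBoundedUnder (· ≥ ·) (nhdsWithin (1:ℝ) (Set.Ioi 1))
      (fun lam => I lam / H lam) := ⟨0, eventually_map.2 (by
    filter_upwards [hIoi] with l hl
    exact le_of_lt (div_pos (hIpos l hl) (hHpos l hl)))⟩
  have hev : ∀ᶠ l in nhdsWithin (1:ℝ) (Set.Ioi 1), 1 < I l / H l :=
    eventually_lt_of_lt_liminf hliminf hbdd
  have hnear : ∀ᶠ l in nhdsWithin (1:ℝ) (Set.Ioi 1), H l < I l ∧ 1 < l := by
    filter_upwards [hev, hIoi] with l h1 h2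
    exact ⟨(one_lt_div (hHpos l h2)).mp h1, h2⟩
  -- main argument
  by_contra hcontra
  push_neg at hcontra
  obtain ⟨lam0, hlam0, hD0⟩ := hcontra
  have hlt : ∀ᶠ l in nhdsWithin (1:ℝ) (Set.Ioi 1), l < lam0 :=
    eventually_nhdsWithin_of_eventually_nhds (Filter.Tendsto.eventually_lt_const hlam0 tendsto_id)
  obtain ⟨c, ⟨hHc, hc1⟩, hclam0⟩ := (hnear.and hlt).exists
  -- the set T
  set f : ℝ → ℝ := fun l => I l - H l with hf
  have hdiff : ∀ x : ℝ, 1 < x → HasDerivAt f (I' x - H' x) x := fun x hx =>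
    (hId x hx).sub (hHd x hx)
  have hcontOn : ∀ s : Set ℝ, s ⊆ Set.Ioi (1:ℝ) → ContinuousOn f s := by
    intro s hs
    intro x hx
    exact ((hdiff x (hs hx)).continuousAt).continuousWithinAt
  set T : Set ℝ := Set.Icc c lam0 ∩ f ⁻¹' Set.Ici 0 with hT
  have hsub : Set.Icc c lam0 ⊆ Set.Ioi (1:ℝ) := fun x hx => lt_of_lt_of_le hc1 hx.1
  have hTclosed : IsClosed T :=
    (hcontOn _ hsub).preimage_isClosed_of_isClosed isClosed_Icc isClosed_Ici
  have hcT : c ∈ T := ⟨⟨le_refl c, hclam0.le⟩, by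
    simp only [Set.mem_preimage, Set.mem_Ici, hf]; linarith⟩
  have hTne : T.Nonempty := ⟨c, hcT⟩
  have hTbdd : BddAbove T := ⟨lam0, fun x hx => hx.1.2⟩
  set m := sSup T with hm
  have hmT : m ∈ T := hTclosed.csSup_mem hTne hTbdd
  have hcm : c ≤ m := le_csSup hTbdd hcT
  have hm1 : 1 < m := lt_of_lt_of_le hc1 hcm
  have hmlam0 : m ≤ lam0 := hmT.1.2
  have hfm : 0 ≤ f m := hmT.2
  have hmlt : m < lam0 := by
    rcases lt_or_eq_of_le hmlam0 with h | h
    · exact h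
    · exfalso; rw [h] at hfm; simp only [hf] at hfm; linarith
  -- on (m, lam0), I < H, hence derivative of f is nonneg there
  have hIooLt : ∀ x ∈ Set.Ioo m lam0, I x < H x := by
    intro x hx
    by_contra hxc
    push_neg at hxc
    have hxT : x ∈ T := ⟨⟨le_trans hcm hx.1.le, hx.2.le⟩, by
      simp only [Set.mem_preimage, Set.mem_Ici, hf]; linarith⟩
    exact absurd (le_csSup hTbdd hxT) (not_le.mpr hx.1)
  have hmono : MonotoneOn f (Set.Icc m lam0) := by
    apply monotoneOn_of_deriv_nonneg (convex_Icc m lam0)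
    · exact hcontOn _ (fun x hx => lt_of_lt_of_le hm1 hx.1)
    · rw [interior_Icc]
      intro x hx
      exact ((hdiff x (lt_trans hm1 hx.1)).differentiableAt).differentiableWithinAt
    · rw [interior_Icc]
      intro x hx
      have hx1 : 1 < x := lt_trans hm1 hx.1
      rw [(hdiff x hx1).deriv]
      have := key x hx1 (hIooLt x hx).le
      linarith
  have hfinal := hmono ⟨le_refl m, hmlam0⟩ ⟨hmlam0, le_refl lam0⟩ hmlam0
  simp only [hf] at hfinal hfm
  linarith
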